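/- Let n ≥ 1, s > 0, and v₀ ∈ H^s(ℝⁿ). Suppose the decay character r*(v₀) exists with -n/2 < r*(v₀) < ∞, i.e. 0 < P_{r*}(v₀) < ∞ where P_r(v₀) = lim_{ρ→0} ρ^{-2r-n} ∫_{B(0,ρ)} |v̂₀(ξ)|² dξ. Then the decay character of Λ^s v₀ := (-Δ)^{s/2} v₀ exists and equals s + r*(v₀); that is, 0 < lim_{ρ→0} ρ^{-2(s + r*(v₀)) - n} ∫_{B(0,ρ)} |ξ|^{2s} |v̂₀(ξ)|² dξ < ∞. -/

import Mathlib

open MeasureTheory Filter Set Metric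
open scoped FourierTransform Topology

/-- `∫_{(0,ρ]} t^γ dt = ρ^(γ+1)/(γ+1)` for `γ > -1`. -/
lemma aux_rpow_integral {γ ρ : ℝ} (hγ : -1 < γ) (hρ : 0 ≤ ρ) :
    ∫ t in Set.Ioc (0:ℝ) ρ, t ^ γ = ρ ^ (γ + 1) / (γ + 1) := by
  rw [← intervalIntegral.integral_of_le hρ, integral_rpow (Or.inl hγ)]
  rw [Real.zero_rpow (by linarith)]
  ring

lemma aux_rpow_integrable {γ ρ : ℝ} (hγ : -1 < γ) (hρ : 0 ≤ ρ) :
    IntegrableOn (fun t : ℝ => t ^ γ) (Set.Ioc 0 ρ) := by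
  rw [← intervalIntegrable_iff_integrableOn_Ioc_of_le hρ]
  exact intervalIntegral.intervalIntegrable_rpow' hγ

/-- ε–δ limit lemma for the averaged integral. -/
lemma aux_tendsto (s β P : ℝ) (hs : 0 < s) (hβ : 0 < β) (F : ℝ → ℝ) (hFm : Monotone F)
    (hF : Filter.Tendsto (fun t : ℝ => t ^ (-β) * F t) (𝓝[>] 0) (𝓝 P)) :
    Filter.Tendsto
      (fun ρ : ℝ => ρ ^ (-(2*s+β)) * ∫ t in Set.Ioc (0:ℝ) ρ, 2*s*t^(2*s-1) * F t)
      (𝓝[>] 0) (𝓝 (2*s*P/(2*s+β))) := by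
  have hα : 0 < 2*s+β := by linarith
  rw [Metric.tendsto_nhdsWithin_nhds] at hF ⊢
  intro ε hε
  have hε₁ : 0 < ε*(2*s+β)/(4*s) := by positivity
  obtain ⟨δ, hδ, H⟩ := hF _ hε₁
  refine ⟨δ, hδ, ?_⟩
  intro ρ hρ hρδ
  set ε₁ := ε*(2*s+β)/(4*s) with hε₁def
  have hρ0 : (0:ℝ) < ρ := hρ
  have hρδ' : ρ < δ := by rwa [Real.dist_eq, sub_zero, abs_of_pos hρ0] at hρδ
  have key : ∀ t : ℝ, 0 < t → t < δ → |F t - P * t ^ β| ≤ ε₁ * t ^ β := by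
    intro t ht htδ
    have h1 := H (Set.mem_Ioi.2 ht) (by rwa [Real.dist_eq, sub_zero, abs_of_pos ht])
    rw [Real.dist_eq] at h1
    have htβ : (0:ℝ) < t ^ β := Real.rpow_pos_of_pos ht β
    have hid : t ^ β * t ^ (-β) = 1 := by
      rw [← Real.rpow_add ht]; simp
    have h2 : |F t - P * t ^ β| = t ^ β * |t ^ (-β) * F t - P| := by
      rw [← abs_of_pos htβ, ← abs_mul]
      congr 1
      rw [mul_sub, ← mul_assoc, hid, one_mul, abs_of_pos htβ]
      ring
    rw [h2]
    calc t ^ β * |t ^ (-β) * F t - P| ≤ t ^ β * ε₁ :=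
          mul_le_mul_of_nonneg_left h1.le htβ.le
      _ = ε₁ * t ^ β := by ring
  have hFmeas : Measurable F := hFm.measurable
  have hexp : (2*s-1)+β = 2*s+β-1 := by ring
  have hbase : IntegrableOn (fun t : ℝ => t ^ (2*s+β-1)) (Set.Ioc 0 ρ) :=
    aux_rpow_integrable (by linarith) hρ0.le
  have hFbound : ∀ᵐ t ∂(volume.restrict (Set.Ioc (0:ℝ) ρ)),
      ‖2*s*t^(2*s-1) * F t‖ ≤ 2*s*(ε₁+|P|) * t ^ (2*s+β-1) := by
    rw [ae_restrict_iff' measurableSet_Ioc]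
    filter_upwards with t ht
    obtain ⟨ht0, htρ⟩ := ht
    have htδ : t < δ := lt_of_le_of_lt htρ hρδ'
    have h1 : |F t| ≤ (ε₁ + |P|) * t ^ β := by
      have hk := key t ht0 htδ
      have h2 : |P * t ^ β| = |P| * t ^ β := by
        rw [abs_mul, abs_of_pos (Real.rpow_pos_of_pos ht0 β)]
      calc |F t| = |(F t - P * t ^ β) + P * t ^ β| := by ring_nf
        _ ≤ |F t - P * t ^ β| + |P * t ^ β| := abs_add_le _ _
        _ ≤ ε₁ * t ^ β + |P| * t ^ β := by rw [h2]; linarith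
        _ = (ε₁ + |P|) * t ^ β := by ring
    have hts : (0:ℝ) < t ^ (2*s-1) := Real.rpow_pos_of_pos ht0 _
    have hmul : t ^ (2*s-1) * t ^ β = t ^ (2*s+β-1) := by
      rw [← Real.rpow_add ht0, hexp]
    calc ‖2*s*t^(2*s-1) * F t‖ = 2*s*t^(2*s-1) * |F t| := by
          rw [Real.norm_eq_abs, abs_mul, abs_of_pos (by positivity)]
      _ ≤ 2*s*t^(2*s-1) * ((ε₁ + |P|) * t ^ β) := by
          apply mul_le_mul_of_nonneg_left h1 (by positivity)
      _ = 2*s*(ε₁+|P|) * (t ^ (2*s-1) * t ^ β) := by ring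
      _ = 2*s*(ε₁+|P|) * t ^ (2*s+β-1) := by rw [hmul]
  have hf_int : IntegrableOn (fun t : ℝ => 2*s*t^(2*s-1) * F t) (Set.Ioc 0 ρ) := by
    apply Integrable.mono' (hbase.const_mul (2*s*(ε₁+|P|)))
    · apply AEStronglyMeasurable.mul _ hFmeas.aestronglyMeasurable
      apply Measurable.aestronglyMeasurable
      measurability
    · exact hFbound
  have hh_int : IntegrableOn (fun t : ℝ => 2*s*P*t^(2*s+β-1)) (Set.Ioc 0 ρ) := by
    have := hbase.const_mul (2*s*P)
    exact this
  have hsub : (∫ t in Set.Ioc (0:ℝ) ρ, 2*s*t^(2*s-1) * F t)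
      - ∫ t in Set.Ioc (0:ℝ) ρ, 2*s*P*t^(2*s+β-1)
      = ∫ t in Set.Ioc (0:ℝ) ρ, (2*s*t^(2*s-1) * F t - 2*s*P*t^(2*s+β-1)) :=
    (integral_sub hf_int hh_int).symm
  have hbnd : ‖∫ t in Set.Ioc (0:ℝ) ρ, (2*s*t^(2*s-1) * F t - 2*s*P*t^(2*s+β-1))‖
      ≤ ∫ t in Set.Ioc (0:ℝ) ρ, 2*s*ε₁ * t ^ (2*s+β-1) := by
    apply norm_integral_le_of_norm_le (hbase.const_mul _)
    rw [ae_restrict_iff' measurableSet_Ioc]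
    filter_upwards with t ht
    obtain ⟨ht0, htρ⟩ := ht
    have htδ : t < δ := lt_of_le_of_lt htρ hρδ'
    have hmul : t ^ (2*s-1) * t ^ β = t ^ (2*s+β-1) := by
      rw [← Real.rpow_add ht0, hexp]
    have hdiff : 2*s*t^(2*s-1) * F t - 2*s*P*t^(2*s+β-1)
        = (2*s*t^(2*s-1)) * (F t - P * t ^ β) := by
      rw [mul_sub, ← hmul]; ring
    have hts : (0:ℝ) < t ^ (2*s-1) := Real.rpow_pos_of_pos ht0 _
    rw [hdiff, Real.norm_eq_abs, abs_mul, abs_of_pos (by positivity)]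
    calc (2*s*t^(2*s-1)) * |F t - P * t ^ β| ≤ (2*s*t^(2*s-1)) * (ε₁ * t ^ β) :=
          mul_le_mul_of_nonneg_left (key t ht0 htδ) (by positivity)
      _ = 2*s*ε₁ * (t ^ (2*s-1) * t ^ β) := by ring
      _ = 2*s*ε₁ * t ^ (2*s+β-1) := by rw [hmul]
  have hexp2 : (2*s+β-1)+1 = 2*s+β := by ring
  have hval : ∫ t in Set.Ioc (0:ℝ) ρ, t ^ (2*s+β-1) = ρ ^ (2*s+β) / (2*s+β) := by
    rw [aux_rpow_integral (by linarith) hρ0.le, hexp2]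
  have hmodel : ∫ t in Set.Ioc (0:ℝ) ρ, 2*s*P*t^(2*s+β-1)
      = 2*s*P * (ρ ^ (2*s+β) / (2*s+β)) := by
    rw [integral_const_mul, hval]
  have hbndval : ∫ t in Set.Ioc (0:ℝ) ρ, 2*s*ε₁ * t ^ (2*s+β-1)
      = 2*s*ε₁ * (ρ ^ (2*s+β) / (2*s+β)) := by
    rw [integral_const_mul, hval]
  set J := ∫ t in Set.Ioc (0:ℝ) ρ, 2*s*t^(2*s-1) * F t with hJdef
  have hJI : |J - 2*s*P * (ρ ^ (2*s+β) / (2*s+β))| ≤ 2*s*ε₁ * (ρ ^ (2*s+β) / (2*s+β)) := by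
    rw [← hmodel, ← hbndval]
    calc |J - ∫ t in Set.Ioc (0:ℝ) ρ, 2*s*P*t^(2*s+β-1)|
        = ‖∫ t in Set.Ioc (0:ℝ) ρ, (2*s*t^(2*s-1) * F t - 2*s*P*t^(2*s+β-1))‖ := by
          rw [← hsub]; rfl
      _ ≤ _ := hbnd
  have hρα : ρ ^ (-(2*s+β)) * ρ ^ (2*s+β) = 1 := by
    rw [← Real.rpow_add hρ0, show -(2*s+β)+(2*s+β) = 0 from by ring, Real.rpow_zero]
  have hpos : (0:ℝ) < ρ ^ (-(2*s+β)) := Real.rpow_pos_of_pos hρ0 _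
  rw [Real.dist_eq]
  have heq : ρ ^ (-(2*s+β)) * J - 2*s*P/(2*s+β)
      = ρ ^ (-(2*s+β)) * (J - 2*s*P * (ρ ^ (2*s+β) / (2*s+β))) := by
    rw [mul_sub]
    congr 1
    symm
    calc ρ ^ (-(2*s+β)) * (2*s*P*(ρ^(2*s+β)/(2*s+β)))
        = (ρ^(-(2*s+β))*ρ^(2*s+β))*(2*s*P/(2*s+β)) := by ring
      _ = 2*s*P/(2*s+β) := by rw [hρα, one_mul]
  rw [heq, abs_mul, abs_of_pos hpos]
  calc ρ^(-(2*s+β)) * |J - 2*s*P * (ρ ^ (2*s+β) / (2*s+β))|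
      ≤ ρ^(-(2*s+β)) * (2*s*ε₁*(ρ^(2*s+β)/(2*s+β))) := mul_le_mul_of_nonneg_left hJI hpos.le
    _ = (ρ^(-(2*s+β))*ρ^(2*s+β)) * (2*s*ε₁/(2*s+β)) := by ring
    _ = 2*s*ε₁/(2*s+β) := by rw [hρα, one_mul]
    _ = ε/2 := by rw [hε₁def]; field_simp; ring
    _ < ε := by linarith

section swap

variable {n : ℕ}

local notation "E" => EuclideanSpace ℝ (Fin n)

/-- Fubini identity: `∫_{(0,ρ]} 2s t^{2s-1} F(t) dt = ρ^{2s} F(ρ) - ∫_{B_ρ} |ξ|^{2s} g`. -/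
lemma aux_swap (s : ℝ) (hs : 0 < s) (g : EuclideanSpace ℝ (Fin n) → ℝ)
    (hg0 : ∀ ξ, 0 ≤ g ξ) (hgi : Integrable g) {ρ : ℝ} (hρ : 0 < ρ) :
    ∫ t in Set.Ioc (0:ℝ) ρ, 2*s*t^(2*s-1) *
        ∫ ξ in Metric.ball (0 : EuclideanSpace ℝ (Fin n)) t, g ξ
      = ρ^(2*s) * (∫ ξ in Metric.ball (0 : EuclideanSpace ℝ (Fin n)) ρ, g ξ)
        - ∫ ξ in Metric.ball (0 : EuclideanSpace ℝ (Fin n)) ρ, ‖ξ‖^(2*s) * g ξ := by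
  have hcint : Integrable (fun t : ℝ => 2*s*t^(2*s-1)) (volume.restrict (Set.Ioc (0:ℝ) ρ)) := by
    have h1 : IntegrableOn (fun t : ℝ => t^(2*s-1)) (Set.Ioc 0 ρ) := by
      rw [← intervalIntegrable_iff_integrableOn_Ioc_of_le hρ.le]
      exact intervalIntegral.intervalIntegrable_rpow' (by linarith)
    exact h1.const_mul (2*s)
  have hprod : Integrable (Function.uncurry fun (ξ : E) (t : ℝ) =>
      (if ‖ξ‖ < t then 2*s*t^(2*s-1) else 0) * g ξ)
      ((volume.restrict (Metric.ball (0:E) ρ)).prod (volume.restrict (Set.Ioc (0:ℝ) ρ))) := by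
    have hB : Integrable (fun p : E × ℝ => g p.1 * (2*s*p.2^(2*s-1)))
        ((volume.restrict (Metric.ball (0:E) ρ)).prod (volume.restrict (Set.Ioc (0:ℝ) ρ))) :=
      Integrable.mul_prod hgi.restrict hcint
    apply Integrable.mono' hB
    · apply AEStronglyMeasurable.mul _ (hgi.aestronglyMeasurable.restrict.comp_fst)
      apply Measurable.aestronglyMeasurable
      apply Measurable.ite (measurableSet_lt measurable_fst.norm measurable_snd)
      · measurability
      · exact measurable_const
    · rw [Measure.prod_restrict]
      rw [ae_restrict_iff' (MeasurableSet.prod measurableSet_ball measurableSet_Ioc)]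
      filter_upwards with p hp
      obtain ⟨hp1, hp2⟩ := hp
      have ht0 : 0 < p.2 := hp2.1
      have hpow : (0:ℝ) < p.2 ^ (2*s-1) := Real.rpow_pos_of_pos ht0 _
      show ‖(if ‖p.1‖ < p.2 then 2*s*p.2^(2*s-1) else 0) * g p.1‖ ≤ g p.1 * (2*s*p.2^(2*s-1))
      rw [Real.norm_eq_abs, abs_mul, abs_of_nonneg (hg0 p.1)]
      by_cases h : ‖p.1‖ < p.2
      · rw [if_pos h, abs_of_pos (by positivity)]
        ring_nf; exact le_refl _
      · rw [if_neg h]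
        simp only [abs_zero, zero_mul]
        exact mul_nonneg (hg0 p.1) (mul_nonneg (by linarith) hpow.le)
  have hswap := integral_integral_swap hprod
  -- evaluate the (ξ, then t) side
  have hξside : (∫ ξ in Metric.ball (0:E) ρ, ∫ t in Set.Ioc (0:ℝ) ρ,
        (if ‖ξ‖ < t then 2*s*t^(2*s-1) else 0) * g ξ)
      = ∫ ξ in Metric.ball (0:E) ρ, (ρ^(2*s) - ‖ξ‖^(2*s)) * g ξ := by
    apply setIntegral_congr_fun measurableSet_ball
    intro ξ hξ
    have hξρ : ‖ξ‖ < ρ := by rwa [mem_ball_zero_iff] at hξ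
    have hξ0 : (0:ℝ) ≤ ‖ξ‖ := norm_nonneg ξ
    have h1 : (fun t : ℝ => (if ‖ξ‖ < t then 2*s*t^(2*s-1) else 0) * g ξ)
        = fun t => (Set.Ioi ‖ξ‖).indicator (fun t => 2*s*t^(2*s-1)) t * g ξ := by
      funext t
      by_cases h : ‖ξ‖ < t <;> simp [Set.indicator_apply, h]
    show (∫ t in Set.Ioc (0:ℝ) ρ, (if ‖ξ‖ < t then 2*s*t^(2*s-1) else 0) * g ξ)
        = (ρ^(2*s) - ‖ξ‖^(2*s)) * g ξ
    rw [h1, integral_mul_const]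
    have h2 : ∫ t in Set.Ioc (0:ℝ) ρ, (Set.Ioi ‖ξ‖).indicator (fun t => 2*s*t^(2*s-1)) t
        = ∫ t in Set.Ioc ‖ξ‖ ρ, 2*s*t^(2*s-1) := by
      have hset : Set.Ioc (0:ℝ) ρ ∩ Set.Ioi ‖ξ‖ = Set.Ioc ‖ξ‖ ρ := by
        ext x
        simp only [Set.mem_inter_iff, Set.mem_Ioc, Set.mem_Ioi]
        constructor
        · rintro ⟨⟨h1', h2'⟩, h3'⟩; exact ⟨h3', h2'⟩
        · rintro ⟨h1', h2'⟩; exact ⟨⟨lt_of_le_of_lt hξ0 h1', h2'⟩, h1'⟩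
      rw [setIntegral_indicator measurableSet_Ioi, hset]
    have h3 : ∫ t in Set.Ioc ‖ξ‖ ρ, 2*s*t^(2*s-1) = ρ^(2*s) - ‖ξ‖^(2*s) := by
      rw [integral_const_mul]
      rw [← intervalIntegral.integral_of_le hξρ.le, integral_rpow (Or.inl (by linarith))]
      rw [show (2*s-1)+1 = 2*s from by ring]
      field_simp
    rw [h2, h3]
  -- evaluate the (t, then ξ) side
  have htside : (∫ t in Set.Ioc (0:ℝ) ρ, ∫ ξ in Metric.ball (0:E) ρ,
        (if ‖ξ‖ < t then 2*s*t^(2*s-1) else 0) * g ξ)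
      = ∫ t in Set.Ioc (0:ℝ) ρ, 2*s*t^(2*s-1) * ∫ ξ in Metric.ball (0:E) t, g ξ := by
    apply setIntegral_congr_fun measurableSet_Ioc
    intro t ht
    obtain ⟨ht0, htρ⟩ := ht
    have h1 : (fun ξ : E => (if ‖ξ‖ < t then 2*s*t^(2*s-1) else 0) * g ξ)
        = fun ξ => (Metric.ball (0:E) t).indicator (fun ξ => 2*s*t^(2*s-1) * g ξ) ξ := by
      funext ξ
      by_cases h : ‖ξ‖ < t <;> simp [Set.indicator_apply, mem_ball_zero_iff, h]
    show (∫ ξ in Metric.ball (0:E) ρ, (if ‖ξ‖ < t then 2*s*t^(2*s-1) else 0) * g ξ)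
        = 2*s*t^(2*s-1) * ∫ ξ in Metric.ball (0:E) t, g ξ
    rw [h1]
    rw [setIntegral_indicator measurableSet_ball]
    rw [Set.inter_eq_self_of_subset_right (Metric.ball_subset_ball htρ)]
    rw [integral_const_mul]
  -- rearrange
  have h4 : ∫ ξ in Metric.ball (0:E) ρ, (ρ^(2*s) - ‖ξ‖^(2*s)) * g ξ
      = ρ^(2*s) * (∫ ξ in Metric.ball (0:E) ρ, g ξ)
        - ∫ ξ in Metric.ball (0:E) ρ, ‖ξ‖^(2*s) * g ξ := by
    have hi1 : IntegrableOn (fun ξ : E => ρ^(2*s) * g ξ) (Metric.ball (0:E) ρ) :=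
      hgi.restrict.const_mul _
    have hi2 : IntegrableOn (fun ξ : E => ‖ξ‖^(2*s) * g ξ) (Metric.ball (0:E) ρ) := by
      apply Integrable.mono' hi1
      · apply AEStronglyMeasurable.mul _ hgi.aestronglyMeasurable.restrict
        exact (continuous_norm.rpow_const (fun x => Or.inr (by positivity))).aestronglyMeasurable
      · rw [ae_restrict_iff' measurableSet_ball]
        filter_upwards with ξ hξ
        rw [mem_ball_zero_iff] at hξ
        rw [Real.norm_eq_abs, abs_mul, abs_of_nonneg (hg0 ξ),
          abs_of_nonneg (Real.rpow_nonneg (norm_nonneg ξ) _)]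
        apply mul_le_mul_of_nonneg_right _ (hg0 ξ)
        exact Real.rpow_le_rpow (norm_nonneg ξ) hξ.le (by positivity)
    have heq : ∀ ξ : E, (ρ^(2*s) - ‖ξ‖^(2*s)) * g ξ = ρ^(2*s) * g ξ - ‖ξ‖^(2*s) * g ξ :=
      fun ξ => by ring
    simp_rw [heq]
    rw [integral_sub hi1 hi2, integral_const_mul]
  rw [← htside, ← hswap, hξside, h4]

end swap

/-- If `v₀ ∈ Hˢ(ℝⁿ)` has decay character `r* ∈ (-n/2, ∞)`, then the decay character of
`Λˢ v₀ = (-Δ)^{s/2} v₀` exists and equals `s + r*`. On the Fourier side, `Λˢ` is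
multiplication by `|ξ|ˢ`. -/
theorem decay_character_fractional_laplacian (n : ℕ) (hn : 1 ≤ n) (s : ℝ) (hs : 0 < s)
    (v₀ : EuclideanSpace ℝ (Fin n) → ℂ) (hv₀ : MemLp v₀ 2)
    (hHs : Integrable (fun ξ : EuclideanSpace ℝ (Fin n) => (1 + ‖ξ‖ ^ 2) ^ s * ‖𝓕 v₀ ξ‖ ^ 2))
    (r : ℝ) (hr : -(n : ℝ) / 2 < r) (P : ℝ) (hP : 0 < P)
    (hlim : Tendsto
      (fun ρ : ℝ => ρ ^ (-2 * r - n) * ∫ ξ in Metric.ball (0 : EuclideanSpace ℝ (Fin n)) ρ, ‖𝓕 v₀ ξ‖ ^ 2)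
      (𝓝[>] 0) (𝓝 P)) :
    ∃ Q : ℝ, 0 < Q ∧ Tendsto
      (fun ρ : ℝ => ρ ^ (-2 * (s + r) - n) *
        ∫ ξ in Metric.ball (0 : EuclideanSpace ℝ (Fin n)) ρ, ‖ξ‖ ^ (2 * s) * ‖𝓕 v₀ ξ‖ ^ 2)
      (𝓝[>] 0) (𝓝 Q) := by
  classical
  set g : EuclideanSpace ℝ (Fin n) → ℝ := fun ξ => ‖𝓕 v₀ ξ‖ ^ 2 with hgdef
  have hg0 : ∀ ξ, 0 ≤ g ξ := fun ξ => by positivity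
  -- measurability of g
  have hone : ∀ ξ : EuclideanSpace ℝ (Fin n), (0:ℝ) < (1 + ‖ξ‖ ^ 2) ^ s :=
    fun ξ => Real.rpow_pos_of_pos (by positivity) s
  have hcont : Continuous (fun ξ : EuclideanSpace ℝ (Fin n) => ((1 + ‖ξ‖ ^ 2) ^ s)⁻¹) := by
    apply Continuous.inv₀
    · exact (continuous_const.add (continuous_norm.pow 2)).rpow_const
        (fun ξ => Or.inr hs.le)
    · exact fun ξ => (hone ξ).ne'
  have hgm : AEStronglyMeasurable g volume := by
    have h1 := hcont.aestronglyMeasurable.mul hHs.aestronglyMeasurable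
    apply h1.congr
    filter_upwards with ξ
    show ((1 + ‖ξ‖ ^ 2) ^ s)⁻¹ * ((1 + ‖ξ‖ ^ 2) ^ s * ‖𝓕 v₀ ξ‖ ^ 2) = g ξ
    rw [← mul_assoc, inv_mul_cancel₀ (hone ξ).ne', one_mul]
  have hfac : ∀ ξ : EuclideanSpace ℝ (Fin n), (1:ℝ) ≤ (1 + ‖ξ‖ ^ 2) ^ s := by
    intro ξ
    have h := Real.rpow_le_rpow zero_le_one
      (show (1:ℝ) ≤ 1 + ‖ξ‖^2 by nlinarith [sq_nonneg ‖ξ‖]) hs.le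
    rwa [Real.one_rpow] at h
  have hgi : Integrable g := by
    apply Integrable.mono' hHs hgm
    filter_upwards with ξ
    rw [Real.norm_eq_abs, abs_of_nonneg (hg0 ξ)]
    exact le_mul_of_one_le_left (hg0 ξ) (hfac ξ)
  -- the local mass function
  set F : ℝ → ℝ := fun t => ∫ ξ in Metric.ball (0 : EuclideanSpace ℝ (Fin n)) t, g ξ with hFdef
  have hFm : Monotone F := by
    intro a b hab
    apply setIntegral_mono_set hgi.integrableOn
    · filter_upwards with ξ using hg0 ξ
    · exact HasSubset.Subset.eventuallyLE (Metric.ball_subset_ball hab)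
  have hβ : (0:ℝ) < 2*r + n := by
    have : -(n:ℝ)/2 < r := hr
    linarith
  have hF' : Tendsto (fun t : ℝ => t ^ (-(2*r + n)) * F t) (𝓝[>] 0) (𝓝 P) := by
    apply hlim.congr
    intro t
    rw [show (-2 * r - (n:ℝ)) = -(2*r + n) from by ring]
  have T2 := aux_tendsto s (2*r + n) P hs hβ F hFm hF'
  have hα : (0:ℝ) < 2*s + (2*r + n) := by linarith
  refine ⟨P - 2*s*P/(2*s+(2*r+n)), ?_, ?_⟩
  · have h1 : 2*s*P/(2*s+(2*r+n)) < P := by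
      rw [div_lt_iff₀ hα]
      nlinarith
    linarith
  · apply (hlim.sub T2).congr'
    filter_upwards [self_mem_nhdsWithin] with ρ hρ0
    have hρ : (0:ℝ) < ρ := hρ0
    have hswap : (∫ t in Set.Ioc (0:ℝ) ρ, 2*s*t^(2*s-1) * F t)
        = ρ^(2*s) * F ρ
          - ∫ ξ in Metric.ball (0 : EuclideanSpace ℝ (Fin n)) ρ, ‖ξ‖^(2*s) * g ξ :=
      aux_swap (n := n) s hs g hg0 hgi hρ
    have hkey : ρ ^ (-(2*s+(2*r+n))) * ρ ^ (2*s) = ρ ^ (-2 * r - (n:ℝ)) := by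
      rw [← Real.rpow_add hρ]
      congr 1
      ring
    have hexp3 : (-2 * (s + r) - (n:ℝ)) = -(2*s+(2*r+n)) := by ring
    calc ρ ^ (-2 * r - (n:ℝ)) * F ρ
          - ρ ^ (-(2*s+(2*r+n))) * ∫ t in Set.Ioc (0:ℝ) ρ, 2*s*t^(2*s-1) * F t
        = ρ ^ (-2 * r - (n:ℝ)) * F ρ
          - ρ ^ (-(2*s+(2*r+n))) * (ρ^(2*s) * F ρ
            - ∫ ξ in Metric.ball (0 : EuclideanSpace ℝ (Fin n)) ρ, ‖ξ‖^(2*s) * g ξ) := by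
          rw [hswap]
      _ = ρ ^ (-2 * r - (n:ℝ)) * F ρ - (ρ ^ (-(2*s+(2*r+n))) * ρ^(2*s)) * F ρ
          + ρ ^ (-(2*s+(2*r+n))) * ∫ ξ in Metric.ball (0 : EuclideanSpace ℝ (Fin n)) ρ, ‖ξ‖^(2*s) * g ξ := by
          ring
      _ = ρ ^ (-(2*s+(2*r+n))) * ∫ ξ in Metric.ball (0 : EuclideanSpace ℝ (Fin n)) ρ, ‖ξ‖^(2*s) * g ξ := by
          rw [hkey]; ring
      _ = ρ ^ (-2 * (s + r) - (n:ℝ)) * ∫ ξ in Metric.ball (0 : EuclideanSpace ℝ (Fin n)) ρ, ‖ξ‖ ^ (2*s) * ‖𝓕 v₀ ξ‖ ^ 2 := by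
          rw [hexp3]
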